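/- arXiv:1009.5386 — 2 statements merged into one kernel-verified Lean document; each statement's English description precedes it below -/
import Mathlib

section
/- Fix an integer n ≥ 0. The integer triples (m,o,p) simultaneously satisfying −2p(o−p)=2, p(np−n−2m+2p)=2, and p(2no−np+n−2m+2p)=2 are exactly: (m,o,p)=(0,0,1), together with (m,o,p)=(0,0,−1) in the case n=0 only. -/
theorem Fn_P1_intersection_solutions (n : ℤ) (hn : 0 ≤ n) :
    ∀ m o p : ℤ,
      (-2 * p * (o - p) = 2 ∧ p * (n * p - n - 2 * m + 2 * p) = 2 ∧
        p * (2 * n * o - n * p + n - 2 * m + 2 * p) = 2) ↔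
      ((m, o, p) = (0, 0, 1) ∨ (n = 0 ∧ (m, o, p) = (0, 0, -1))) := by
  intro m o p
  constructor
  · rintro ⟨h1, h2, h3⟩
    have hu : p * (p - o) = 1 := by ring_nf; linarith
    have hp : p = 1 ∨ p = -1 :=
      Int.isUnit_iff.mp (IsUnit.of_mul_eq_one _ hu)
    rcases hp with hp | hp <;> subst hp
    · have ho : o = 0 := by linarith
      subst ho
      have hm : m = 0 := by linarith
      subst hm
      left; rfl
    · have ho : o = 0 := by linarith
      subst ho
      have hmn : n + m = 0 := by nlinarith
      have hmn2 : m = n := by nlinarith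
      have hn0 : n = 0 := by omega
      have hm : m = 0 := by omega
      subst hm
      right; exact ⟨hn0, rfl⟩
  · rintro (h | ⟨hn0, h⟩) <;>
      simp only [Prod.mk.injEq] at h <;>
      obtain ⟨hm, ho, hp⟩ := h <;> subst hm <;> subst ho <;> subst hp
    · exact ⟨by ring, by ring, by ring⟩
    · subst hn0; exact ⟨by ring, by ring, by ring⟩
end

section
/- The integer quadruples (m,n,o,p) simultaneously satisfying −2p(o−p)=2, p(2m−2n−2o+p+1)=2, and −p(2m−2n−p−1)=2 are exactly those with m=n, o=0, p=1. -/
theorem dP2_P1_intersection_solutions :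
    ∀ m n o p : ℤ,
      (-2 * p * (o - p) = 2 ∧ p * (2 * m - 2 * n - 2 * o + p + 1) = 2 ∧
        -p * (2 * m - 2 * n - p - 1) = 2) ↔
      (m = n ∧ o = 0 ∧ p = 1) := by
  intro m n o p
  constructor
  · rintro ⟨h1, h2, h3⟩
    have hu : IsUnit p := IsUnit.of_mul_eq_one (a := p) (-(o - p)) (by nlinarith [h1])
    rcases Int.isUnit_iff.mp hu with rfl | rfl
    · refine ⟨by linarith, by linarith, rfl⟩
    · exfalso; linarith
  · rintro ⟨rfl, rfl, rfl⟩
    norm_num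
end
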